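/- The map ‖μ‖_d := sup { ∫ f dμ : ‖f‖_∞ ≤ 1, f 1-Lipschitz } is a norm on the vector space of bounded signed tight Borel measures on a metric space X; in particular ‖μ‖_d = 0 implies μ = 0. -/

import Mathlib

open MeasureTheory Filter Metric Topology
open scoped ENNReal NNReal

/-- Integral of a real function against a signed measure, via the Jordan decomposition. -/
noncomputable def sInt {X : Type*} [MeasurableSpace X] (s : SignedMeasure X) (f : X → ℝ) : ℝ :=
  (∫ x, f x ∂s.toJordanDecomposition.posPart) - ∫ x, f x ∂s.toJordanDecomposition.negPart

/-- The bounded-Lipschitz norm `‖s‖_d` of a signed measure. -/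
noncomputable def blNorm {X : Type*} [MetricSpace X] [MeasurableSpace X]
    (s : SignedMeasure X) : ℝ :=
  ⨆ f : {f : X → ℝ // (∀ x, |f x| ≤ 1) ∧ LipschitzWith 1 f}, sInt s f.1

/-- A signed measure is tight if its total variation is inner regular by compact sets. -/
def Tight {X : Type*} [MetricSpace X] [MeasurableSpace X] (s : SignedMeasure X) : Prop :=
  s.totalVariation.InnerRegular

section Aux

variable {X : Type*} [MetricSpace X] [MeasurableSpace X] [BorelSpace X]

/-- The admissible functions index type is nonempty (take `0`). -/
instance adm_nonempty : Nonempty {f : X → ℝ // (∀ x, |f x| ≤ 1) ∧ LipschitzWith 1 f} :=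
  ⟨⟨0, fun x => by simp, (LipschitzWith.const' 0).weaken zero_le_one⟩⟩

lemma adm_integrable {μ : Measure X} [IsFiniteMeasure μ] {f : X → ℝ}
    (hb : ∀ x, |f x| ≤ 1) (hl : LipschitzWith 1 f) : Integrable f μ := by
  refine ⟨hl.continuous.measurable.aestronglyMeasurable, ?_⟩
  exact HasFiniteIntegral.of_bounded (C := 1)
    (Eventually.of_forall fun x => by simpa [Real.norm_eq_abs] using hb x)

lemma adm_neg {f : X → ℝ} (hf : (∀ x, |f x| ≤ 1) ∧ LipschitzWith 1 f) :
    (∀ x, |(-f) x| ≤ 1) ∧ LipschitzWith 1 (-f) :=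
  ⟨fun x => by simpa using hf.1 x, hf.2.neg⟩

/-- Uniform bound on `sInt s f` over admissible `f`. -/
lemma sInt_le_bound (s : SignedMeasure X) {f : X → ℝ}
    (hb : ∀ x, |f x| ≤ 1) (hl : LipschitzWith 1 f) :
    sInt s f ≤ (s.toJordanDecomposition.posPart Set.univ).toReal +
      (s.toJordanDecomposition.negPart Set.univ).toReal := by
  have h1 : ‖∫ x, f x ∂s.toJordanDecomposition.posPart‖ ≤
      1 * (s.toJordanDecomposition.posPart Set.univ).toReal :=
    norm_integral_le_of_norm_le_const
      (Eventually.of_forall fun x => by simpa [Real.norm_eq_abs] using hb x)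
  have h2 : ‖∫ x, f x ∂s.toJordanDecomposition.negPart‖ ≤
      1 * (s.toJordanDecomposition.negPart Set.univ).toReal :=
    norm_integral_le_of_norm_le_const
      (Eventually.of_forall fun x => by simpa [Real.norm_eq_abs] using hb x)
  rw [Real.norm_eq_abs] at h1 h2
  rw [sInt]
  have := abs_le.mp h1
  have := abs_le.mp h2
  linarith

lemma blNorm_bddAbove (s : SignedMeasure X) :
    BddAbove (Set.range fun f : {f : X → ℝ // (∀ x, |f x| ≤ 1) ∧ LipschitzWith 1 f} =>
      sInt s f.1) := by
  refine ⟨(s.toJordanDecomposition.posPart Set.univ).toReal +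
    (s.toJordanDecomposition.negPart Set.univ).toReal, ?_⟩
  rintro x ⟨f, rfl⟩
  exact sInt_le_bound s f.2.1 f.2.2

lemma sInt_le_blNorm (s : SignedMeasure X)
    (f : {f : X → ℝ // (∀ x, |f x| ≤ 1) ∧ LipschitzWith 1 f}) :
    sInt s f.1 ≤ blNorm s :=
  le_ciSup (blNorm_bddAbove s) f

lemma sInt_zero_fun (s : SignedMeasure X) : sInt s (0 : X → ℝ) = 0 := by
  simp [sInt]

lemma blNorm_nonneg (s : SignedMeasure X) : 0 ≤ blNorm s := by
  have := sInt_le_blNorm s ⟨0, fun x => by simp, (LipschitzWith.const' 0).weaken zero_le_one⟩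
  rwa [sInt_zero_fun] at this

/-- Two finite Borel measures agreeing on integrals of 1-Lipschitz functions bounded by 1
are equal. -/
lemma measure_ext_of_adm (μ ν : Measure X) [IsFiniteMeasure μ] [IsFiniteMeasure ν]
    (h : ∀ f : X → ℝ, (∀ x, |f x| ≤ 1) → LipschitzWith 1 f →
      ∫ x, f x ∂μ = ∫ x, f x ∂ν) : μ = ν := by
  have key : ∀ F : Set X, IsClosed F → μ F = ν F := by
    intro F hF
    rcases F.eq_empty_or_nonempty with rfl | hne
    · simp
    set g : ℕ → X → ℝ := fun n x => max (((n : ℝ) + 1)⁻¹ - infDist x F) 0 with hgdef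
    have hn1 : ∀ n : ℕ, (0 : ℝ) < (n : ℝ) + 1 := fun n => by positivity
    have hinv1 : ∀ n : ℕ, ((n : ℝ) + 1)⁻¹ ≤ 1 := by
      intro n
      rw [inv_le_one_iff₀]
      right
      simp
    have hg0 : ∀ n x, 0 ≤ g n x := fun n x => le_max_right _ _
    have hg1 : ∀ n x, g n x ≤ ((n : ℝ) + 1)⁻¹ := by
      intro n x
      apply max_le
      · have : 0 ≤ infDist x F := infDist_nonneg
        linarith
      · positivity
    have hgb : ∀ n x, |g n x| ≤ 1 := by
      intro n x
      rw [abs_le]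
      constructor
      · linarith [hg0 n x]
      · exact le_trans (hg1 n x) (hinv1 n)
    have hgl : ∀ n, LipschitzWith 1 (g n) := by
      intro n
      apply LipschitzWith.of_dist_le_mul
      intro x y
      have h1 := lipschitz_infDist_pt (s := F) |>.dist_le_mul x y
      rw [Real.dist_eq]
      calc |g n x - g n y|
          ≤ |(((n : ℝ) + 1)⁻¹ - infDist x F) - (((n : ℝ) + 1)⁻¹ - infDist y F)| :=
            abs_max_sub_max_le_abs _ _ _
        _ = dist (infDist y F) (infDist x F) := by rw [Real.dist_eq]; congr 1; ring
        _ ≤ 1 * dist y x := by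
            simpa using (lipschitz_infDist_pt (s := F)).dist_le_mul y x
        _ = 1 * dist x y := by rw [dist_comm]
    set f : ℕ → X → ℝ := fun n x => ((n : ℝ) + 1) * g n x with hfdef
    have hfb : ∀ n x, ‖f n x‖ ≤ 1 := by
      intro n x
      rw [Real.norm_eq_abs, abs_of_nonneg (mul_nonneg (le_of_lt (hn1 n)) (hg0 n x))]
      calc ((n : ℝ) + 1) * g n x ≤ ((n : ℝ) + 1) * ((n : ℝ) + 1)⁻¹ := by
            apply mul_le_mul_of_nonneg_left (hg1 n x) (le_of_lt (hn1 n))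
        _ = 1 := mul_inv_cancel₀ (ne_of_gt (hn1 n))
    have hfint : ∀ n, ∫ x, f n x ∂μ = ∫ x, f n x ∂ν := by
      intro n
      have := h (g n) (hgb n) (hgl n)
      simp only [hfdef]
      rw [integral_const_mul, integral_const_mul, this]
    have hftend : ∀ x, Tendsto (fun n => f n x) atTop (𝓝 (Set.indicator F (1 : X → ℝ) x)) := by
      intro x
      by_cases hx : x ∈ F
      · have hd : infDist x F = 0 := infDist_zero_of_mem hx
        have : ∀ n, f n x = 1 := by
          intro n
          simp only [hfdef, hgdef, hd, sub_zero]
          rw [max_eq_left (by positivity), mul_inv_cancel₀ (ne_of_gt (hn1 n))]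
        rw [Set.indicator_of_mem hx]
        simp only [this, Pi.one_apply]
        exact tendsto_const_nhds
      · have hd : 0 < infDist x F := (hF.notMem_iff_infDist_pos hne).mp hx
        have htend0 : Tendsto (fun n : ℕ => ((n : ℝ) + 1)⁻¹) atTop (𝓝 0) := by
          simpa only [one_div] using tendsto_one_div_add_atTop_nhds_zero_nat (𝕜 := ℝ)
        have hev : ∀ᶠ n : ℕ in atTop, ((n : ℝ) + 1)⁻¹ < infDist x F :=
          htend0.eventually_lt_const hd
        have hev' : (fun n => f n x) =ᶠ[atTop] fun _ => (0 : ℝ) := by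
          filter_upwards [hev] with n hn
          simp only [hfdef, hgdef]
          rw [max_eq_right (by linarith), mul_zero]
        rw [Set.indicator_of_notMem hx]
        exact Tendsto.congr' hev'.symm tendsto_const_nhds
    have hmeas : ∀ (ρ : Measure X) (n : ℕ), AEStronglyMeasurable (f n) ρ := by
      intro ρ n
      exact (continuous_const.mul (hgl n).continuous).measurable.aestronglyMeasurable
    have hμ := tendsto_integral_of_dominated_convergence (μ := μ) (F := f)
      (f := Set.indicator F (1 : X → ℝ)) (fun _ => (1 : ℝ)) (hmeas μ) (integrable_const 1)
      (fun n => Eventually.of_forall (fun x => hfb n x))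
      (Eventually.of_forall hftend)
    have hν := tendsto_integral_of_dominated_convergence (μ := ν) (F := f)
      (f := Set.indicator F (1 : X → ℝ)) (fun _ => (1 : ℝ)) (hmeas ν) (integrable_const 1)
      (fun n => Eventually.of_forall (fun x => hfb n x))
      (Eventually.of_forall hftend)
    simp only [hfint] at hμ
    have heq : ∫ x, Set.indicator F (1 : X → ℝ) x ∂μ =
        ∫ x, Set.indicator F (1 : X → ℝ) x ∂ν := tendsto_nhds_unique hμ hν
    rw [integral_indicator_one hF.measurableSet, integral_indicator_one hF.measurableSet] at heq
    exact (ENNReal.toReal_eq_toReal_iff' (measure_ne_top μ F) (measure_ne_top ν F)).mp heq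
  refine ext_of_generate_finite _ ?_ isPiSystem_isClosed (fun F hF => key F hF)
    (key _ isClosed_univ)
  rw [BorelSpace.measurable_eq (α := X), borel_eq_generateFrom_isClosed]

end Aux

section SIntAlg

variable {X : Type*} [MeasurableSpace X]

lemma jd_apply (s : SignedMeasure X) {A : Set X} (hA : MeasurableSet A) :
    s A = (s.toJordanDecomposition.posPart A).toReal -
      (s.toJordanDecomposition.negPart A).toReal := by
  conv_lhs => rw [← s.toSignedMeasure_toJordanDecomposition]
  rw [JordanDecomposition.toSignedMeasure, Measure.toSignedMeasure_sub_apply hA]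
  rfl

/-- Additivity of `sInt` in the measure argument, for bounded continuous functions. -/
lemma sInt_add (s t : SignedMeasure X) {f : X → ℝ}
    (hmeas : Measurable f) (hb : ∀ x, |f x| ≤ 1) :
    sInt (s + t) f = sInt s f + sInt t f := by
  set p := (s + t).toJordanDecomposition.posPart
  set n := (s + t).toJordanDecomposition.negPart
  set p1 := s.toJordanDecomposition.posPart
  set n1 := s.toJordanDecomposition.negPart
  set p2 := t.toJordanDecomposition.posPart
  set n2 := t.toJordanDecomposition.negPart
  have hmeaseq : p + (n1 + n2) = n + (p1 + p2) := by
    ext A hA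
    have h1 := jd_apply (s + t) hA
    have h2 := jd_apply s hA
    have h3 := jd_apply t hA
    rw [show ((s + t) : SignedMeasure X) A = s A + t A from VectorMeasure.add_apply s t A] at h1
    simp only [Measure.add_apply]
    rw [← ENNReal.toReal_eq_toReal_iff' (by finiteness) (by finiteness)]
    rw [ENNReal.toReal_add (by finiteness) (by finiteness),
      ENNReal.toReal_add (by finiteness) (by finiteness),
      ENNReal.toReal_add (by finiteness) (by finiteness),
      ENNReal.toReal_add (by finiteness) (by finiteness)]
    linarith
  have hintg : ∀ (ρ : Measure X) [IsFiniteMeasure ρ], Integrable f ρ := by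
    intro ρ _
    refine ⟨hmeas.aestronglyMeasurable, ?_⟩
    exact HasFiniteIntegral.of_bounded (C := 1)
      (Eventually.of_forall fun x => by simpa [Real.norm_eq_abs] using hb x)
  have hinteq : ∫ x, f x ∂(p + (n1 + n2)) = ∫ x, f x ∂(n + (p1 + p2)) := by rw [hmeaseq]
  rw [integral_add_measure (hintg p) ((hintg n1).add_measure (hintg n2)),
    integral_add_measure (hintg n) ((hintg p1).add_measure (hintg p2)),
    integral_add_measure (hintg n1) (hintg n2),
    integral_add_measure (hintg p1) (hintg p2)] at hinteq
  simp only [sInt]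
  linarith

lemma sInt_smul (c : ℝ) (s : SignedMeasure X) (f : X → ℝ) :
    sInt (c • s) f = c * sInt s f := by
  rw [sInt, sInt, SignedMeasure.toJordanDecomposition_smul_real]
  rcases le_or_gt 0 c with hc | hc
  · rw [JordanDecomposition.real_smul_posPart_nonneg _ _ hc,
      JordanDecomposition.real_smul_negPart_nonneg _ _ hc]
    have h1 : (c.toNNReal • s.toJordanDecomposition.posPart : Measure X) =
        ((c.toNNReal : ℝ≥0∞) • s.toJordanDecomposition.posPart : Measure X) := rfl
    have h2 : (c.toNNReal • s.toJordanDecomposition.negPart : Measure X) =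
        ((c.toNNReal : ℝ≥0∞) • s.toJordanDecomposition.negPart : Measure X) := rfl
    rw [h1, h2, integral_smul_measure, integral_smul_measure]
    simp only [ENNReal.coe_toReal, Real.coe_toNNReal c hc, smul_eq_mul]
    ring
  · rw [JordanDecomposition.real_smul_posPart_neg _ _ hc,
      JordanDecomposition.real_smul_negPart_neg _ _ hc]
    have h1 : ((-c).toNNReal • s.toJordanDecomposition.negPart : Measure X) =
        (((-c).toNNReal : ℝ≥0∞) • s.toJordanDecomposition.negPart : Measure X) := rfl
    have h2 : ((-c).toNNReal • s.toJordanDecomposition.posPart : Measure X) =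
        (((-c).toNNReal : ℝ≥0∞) • s.toJordanDecomposition.posPart : Measure X) := rfl
    rw [h1, h2, integral_smul_measure, integral_smul_measure]
    simp only [ENNReal.coe_toReal, Real.coe_toNNReal (-c) (by linarith), smul_eq_mul]
    ring

end SIntAlg

/-- `‖·‖_d` is a norm on the vector space of bounded signed tight Borel
measures: it is nonnegative, vanishes exactly at `0`, is absolutely homogeneous and
satisfies the triangle inequality. -/
lemma sInt_neg_fun {X : Type*} [MeasurableSpace X] (s : SignedMeasure X) (f : X → ℝ) :
    sInt s (-f) = - sInt s f := by
  simp only [sInt, Pi.neg_apply, integral_neg]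
  ring

theorem blNorm_is_norm (X : Type*) [MetricSpace X] [MeasurableSpace X] [BorelSpace X] :
    (∀ s : SignedMeasure X, Tight s → 0 ≤ blNorm s) ∧
    (∀ s : SignedMeasure X, Tight s → (blNorm s = 0 ↔ s = 0)) ∧
    (∀ (c : ℝ) (s : SignedMeasure X), Tight s → blNorm (c • s) = |c| * blNorm s) ∧
    (∀ s t : SignedMeasure X, Tight s → Tight t → blNorm (s + t) ≤ blNorm s + blNorm t) := by
  refine ⟨fun s _ => blNorm_nonneg s, fun s _ => ?_, fun c s _ => ?_, fun s t _ _ => ?_⟩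
  · constructor
    · intro h0
      have hzero : ∀ f : {f : X → ℝ // (∀ x, |f x| ≤ 1) ∧ LipschitzWith 1 f},
          sInt s f.1 = 0 := by
        intro f
        have h1 := sInt_le_blNorm s f
        have h2 := sInt_le_blNorm s ⟨-f.1, adm_neg f.2⟩
        have h3 : sInt s (-f.1) = - sInt s f.1 := sInt_neg_fun s f.1
        rw [h0] at h1 h2
        simp only [h3] at h2
        linarith
      have hint : ∀ f : X → ℝ, (∀ x, |f x| ≤ 1) → LipschitzWith 1 f →
          ∫ x, f x ∂s.toJordanDecomposition.posPart =
          ∫ x, f x ∂s.toJordanDecomposition.negPart := by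
        intro f hb hl
        have := hzero ⟨f, hb, hl⟩
        simp only [sInt] at this
        linarith
      have heq := measure_ext_of_adm s.toJordanDecomposition.posPart
        s.toJordanDecomposition.negPart hint
      have hms := s.toJordanDecomposition.mutuallySingular
      rw [heq] at hms
      have hneg0 : s.toJordanDecomposition.negPart = 0 :=
        (Measure.MutuallySingular.self_iff _).mp hms
      have hpos0 : s.toJordanDecomposition.posPart = 0 := heq.trans hneg0
      have hjd0 : s.toJordanDecomposition = 0 := by
        ext1
        · rw [hpos0, JordanDecomposition.zero_posPart]
        · rw [hneg0, JordanDecomposition.zero_negPart]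
      rw [← s.toSignedMeasure_toJordanDecomposition, hjd0,
        JordanDecomposition.toSignedMeasure_zero]
    · rintro rfl
      have h0 : ∀ f : {f : X → ℝ // (∀ x, |f x| ≤ 1) ∧ LipschitzWith 1 f},
          sInt (0 : SignedMeasure X) f.1 = 0 := by
        intro f
        simp [sInt, SignedMeasure.toJordanDecomposition_zero,
          JordanDecomposition.zero_posPart, JordanDecomposition.zero_negPart]
      rw [blNorm]
      simp only [h0]
      exact ciSup_const
  · rcases le_or_gt 0 c with hc | hc
    · rw [abs_of_nonneg hc, blNorm, blNorm]
      simp only [sInt_smul]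
      exact (Real.mul_iSup_of_nonneg hc _).symm
    · have h2 : -c * blNorm s =
          ⨆ f : {f : X → ℝ // (∀ x, |f x| ≤ 1) ∧ LipschitzWith 1 f}, (-c) * sInt s f.1 :=
        Real.mul_iSup_of_nonneg (by linarith) _
      rw [abs_of_neg hc, h2, blNorm, iSup, iSup]
      congr 1
      ext r
      simp only [Set.mem_range]
      constructor
      · rintro ⟨f, rfl⟩
        refine ⟨⟨-f.1, adm_neg f.2⟩, ?_⟩
        simp only
        rw [sInt_neg_fun, sInt_smul]
        ring
      · rintro ⟨f, rfl⟩
        refine ⟨⟨-f.1, adm_neg f.2⟩, ?_⟩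
        simp only
        rw [sInt_smul, sInt_neg_fun]
        ring
  · rw [blNorm]
    apply ciSup_le
    intro f
    rw [sInt_add s t f.2.2.continuous.measurable f.2.1]
    exact add_le_add (sInt_le_blNorm s f) (sInt_le_blNorm t f)
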